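/- Let ρ ∈ (0,1), P_S > 0, P_R > 0, P_Δ > 0, k ∈ (0,1], σ_R² > 0, σ_D² > 0, and Ω_SR, Ω_RR, Ω_RD > 0. Let U, V, W be mutually independent real random variables, exponentially distributed with means Ω_SR, Ω_RR, Ω_RD respectively. Define Y = min{ (1−ρ)·P_S·U / ((1−ρ)·k·(P_R+P_Δ)·V + σ_R²), P_R·W/(P_Δ·W + σ_D²) }. Then for every x with 0 ≤ x < P_R/P_Δ, P(Y ≤ x) = 1 − (P_S·Ω_SR/(P_S·Ω_SR + k·(P_R+P_Δ)·Ω_RR·x))·exp(−(σ_R²/((1−ρ)·P_S·Ω_SR))·x − (σ_D²/((P_R − P_Δ·x)·Ω_RD))·x), and for every x ≥ P_R/P_Δ, P(Y ≤ x) = 1. -/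

import Mathlib

open MeasureTheory ProbabilityTheory Real
open scoped ENNReal

lemma aux_expMeasure_apply (r : ℝ) {s : Set ℝ} (hs : MeasurableSet s) :
    expMeasure r s = ∫⁻ x in s, exponentialPDF r x := by
  rw [expMeasure, gammaMeasure, withDensity_apply _ hs]; rfl

lemma aux_exp_Iio (r : ℝ) : expMeasure r (Set.Iio 0) = 0 := by
  rw [aux_expMeasure_apply r measurableSet_Iio]
  exact lintegral_exponentialPDF_of_nonpos le_rfl

lemma aux_exp_ae_nonneg (r : ℝ) : ∀ᵐ w ∂(expMeasure r), 0 ≤ w := by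
  rw [ae_iff]
  have : {w : ℝ | ¬ 0 ≤ w} = Set.Iio 0 := by ext w; simp [not_le]
  rw [this]; exact aux_exp_Iio r

lemma aux_exp_Ioi {r t : ℝ} (hr : 0 < r) (ht : 0 ≤ t) :
    expMeasure r (Set.Ioi t) = ENNReal.ofReal (Real.exp (-(r * t))) := by
  have := isProbabilityMeasure_expMeasure hr
  have hIic : expMeasure r (Set.Iic t) = ENNReal.ofReal (1 - Real.exp (-(r * t))) := by
    rw [aux_expMeasure_apply r measurableSet_Iic,
      lintegral_exponentialPDF_eq_antiDeriv hr, if_pos ht]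
  have hle : Real.exp (-(r * t)) ≤ 1 := Real.exp_le_one_iff.2 (by nlinarith)
  rw [show Set.Ioi t = (Set.Iic t)ᶜ from Set.compl_Iic.symm,
    measure_compl measurableSet_Iic (measure_ne_top _ _), measure_univ, hIic,
    ← ENNReal.ofReal_one, ← ENNReal.ofReal_sub _ (by linarith)]
  congr 1; ring

lemma aux_laplace {r a : ℝ} (hr : 0 < r) (ha : 0 ≤ a) :
    ∫⁻ v, ENNReal.ofReal (Real.exp (-(a * v))) ∂(expMeasure r)
      = ENNReal.ofReal (r / (r + a)) := by
  have hra : 0 < r + a := by linarith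
  have hgm : Measurable (fun v : ℝ => ENNReal.ofReal (Real.exp (-(a * v)))) :=
    ((measurable_const.mul measurable_id).neg.exp).ennreal_ofReal
  rw [expMeasure, gammaMeasure,
    lintegral_withDensity_eq_lintegral_mul _
      (show Measurable (gammaPDF 1 r) from (measurable_gammaPDFReal 1 r).ennreal_ofReal) hgm]
  have key : (fun v => (gammaPDF 1 r * fun v : ℝ => ENNReal.ofReal (Real.exp (-(a * v)))) v)
      = fun v => ENNReal.ofReal (r / (r + a)) * exponentialPDF (r + a) v := by
    funext v
    simp only [Pi.mul_apply]
    have h1 : gammaPDF 1 r v = exponentialPDF r v := rfl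
    rw [h1]
    by_cases hv : 0 ≤ v
    · rw [exponentialPDF_of_nonneg hv, exponentialPDF_of_nonneg hv,
        ← ENNReal.ofReal_mul (by positivity), ← ENNReal.ofReal_mul (by positivity)]
      congr 1
      rw [mul_assoc, ← Real.exp_add, show -(r * v) + -(a * v) = -((r + a) * v) by ring]
      field_simp
    · rw [exponentialPDF_of_neg (lt_of_not_ge hv), exponentialPDF_of_neg (lt_of_not_ge hv)]
      simp
  rw [key, lintegral_const_mul _
      (show Measurable (exponentialPDF (r + a)) from
        (measurable_exponentialPDFReal (r + a)).ennreal_ofReal),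
    lintegral_exponentialPDF_eq_one hra, mul_one]

set_option maxHeartbeats 2000000 in
theorem cdf_Y_H1
    {α : Type*} [MeasureSpace α] [IsProbabilityMeasure (ℙ : Measure α)]
    (U V W : α → ℝ) (hUm : Measurable U) (hVm : Measurable V) (hWm : Measurable W)
    (ρ P_S P_R P_Δ k σR2 σD2 Ω_SR Ω_RR Ω_RD : ℝ)
    (hρ : ρ ∈ Set.Ioo (0 : ℝ) 1) (hPS : 0 < P_S) (hPR : 0 < P_R) (hPΔ : 0 < P_Δ)
    (hk : k ∈ Set.Ioc (0 : ℝ) 1) (hσR : 0 < σR2) (hσD : 0 < σD2)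
    (hΩSR : 0 < Ω_SR) (hΩRR : 0 < Ω_RR) (hΩRD : 0 < Ω_RD)
    (hU : Measure.map U ℙ = expMeasure (1 / Ω_SR))
    (hV : Measure.map V ℙ = expMeasure (1 / Ω_RR))
    (hW : Measure.map W ℙ = expMeasure (1 / Ω_RD))
    (hindep : iIndepFun (m := fun _ : Fin 3 => (inferInstance : MeasurableSpace ℝ))
      ![U, V, W] ℙ)
    (Y : α → ℝ)
    (hY : ∀ ω, Y ω = min
        ((1 - ρ) * P_S * U ω / ((1 - ρ) * k * (P_R + P_Δ) * V ω + σR2))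
        (P_R * W ω / (P_Δ * W ω + σD2))) :
    (∀ x : ℝ, 0 ≤ x → x < P_R / P_Δ →
      (ℙ {ω | Y ω ≤ x}).toReal
        = 1 - (P_S * Ω_SR / (P_S * Ω_SR + k * (P_R + P_Δ) * Ω_RR * x))
            * exp (-(σR2 / ((1 - ρ) * P_S * Ω_SR)) * x
              - (σD2 / ((P_R - P_Δ * x) * Ω_RD)) * x)) ∧
    (∀ x : ℝ, P_R / P_Δ ≤ x → (ℙ {ω | Y ω ≤ x}).toReal = 1) := by
  obtain ⟨hρ0, hρ1⟩ := hρ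
  obtain ⟨hk0, hk1⟩ := hk
  have h1ρ : 0 < 1 - ρ := by linarith
  have hrU : 0 < 1 / Ω_SR := by positivity
  have hrV : 0 < 1 / Ω_RR := by positivity
  have hrW : 0 < 1 / Ω_RD := by positivity
  have hN : 0 < (1 - ρ) * P_S := by positivity
  haveI := isProbabilityMeasure_expMeasure hrU
  haveI := isProbabilityMeasure_expMeasure hrV
  haveI := isProbabilityMeasure_expMeasure hrW
  have hm : ∀ i, Measurable (![U, V, W] i) := by
    intro i; fin_cases i <;> simpa
  have hUVW : IndepFun (fun ω => (U ω, V ω)) W ℙ := by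
    have h := hindep.indepFun_prodMk hm 0 1 2 (by decide) (by decide)
    simpa using h
  have hUV : IndepFun U V ℙ := by
    have h := hindep.indepFun (show (0 : Fin 3) ≠ 1 by decide)
    simpa using h
  have hmapUV : Measure.map (fun ω => (U ω, V ω)) ℙ
      = (expMeasure (1 / Ω_SR)).prod (expMeasure (1 / Ω_RR)) := by
    rw [← hU, ← hV]
    exact (indepFun_iff_map_prod_eq_prod_map_map hUm.aemeasurable hVm.aemeasurable).1 hUV
  constructor
  · intro x hx0 hxlt
    have hPRx : 0 < P_R - P_Δ * x := by
      have := (lt_div_iff₀ hPΔ).1 hxlt; nlinarith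
    set a := x * k * (P_R + P_Δ) / (P_S * Ω_SR) with ha_def
    set b := x * σR2 / ((1 - ρ) * P_S * Ω_SR) with hb_def
    set t := x * σD2 / (P_R - P_Δ * x) with ht_def
    have ha0 : 0 ≤ a := by rw [ha_def]; positivity
    have hb0 : 0 ≤ b := by
      rw [hb_def]
      exact div_nonneg (by positivity) (by positivity)
    have ht0 : 0 ≤ t := by rw [ht_def]; positivity
    set E₁ : Set (ℝ × ℝ) :=
      {p : ℝ × ℝ | x < (1 - ρ) * P_S * p.1 / ((1 - ρ) * k * (P_R + P_Δ) * p.2 + σR2)}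
      with hE₁_def
    set E₂ : Set ℝ := {w : ℝ | x < P_R * w / (P_Δ * w + σD2)} with hE₂_def
    have hE₁m : MeasurableSet E₁ := by
      apply measurableSet_lt measurable_const
      exact (measurable_const.mul measurable_fst).div
        ((measurable_const.mul measurable_snd).add measurable_const)
    have hE₂m : MeasurableSet E₂ := by
      apply measurableSet_lt measurable_const
      exact (measurable_const.mul measurable_id).div
        ((measurable_const.mul measurable_id).add measurable_const)
    have hset : {ω | x < Y ω} = (fun ω => (U ω, V ω)) ⁻¹' E₁ ∩ W ⁻¹' E₂ := by
      ext ω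
      simp [hY ω, lt_min_iff, hE₁_def, hE₂_def, Set.mem_setOf_eq]
    have hPT : ℙ (W ⁻¹' E₂) = ENNReal.ofReal (Real.exp (-(1 / Ω_RD * t))) := by
      rw [← Measure.map_apply hWm hE₂m, hW]
      have hcong : E₂ =ᵐ[expMeasure (1 / Ω_RD)] Set.Ioi t := by
        filter_upwards [aux_exp_ae_nonneg (1 / Ω_RD)] with w hw
        have hD : 0 < P_Δ * w + σD2 := by nlinarith
        show (w ∈ E₂) = (w ∈ Set.Ioi t)
        rw [eq_iff_iff, hE₂_def]
        simp only [Set.mem_setOf_eq, Set.mem_Ioi]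
        rw [lt_div_iff₀ hD, ht_def, div_lt_iff₀ hPRx]
        constructor <;> intro h <;> nlinarith
      rw [measure_congr hcong, aux_exp_Ioi hrW ht0]
    have hPS1 : ℙ ((fun ω => (U ω, V ω)) ⁻¹' E₁)
        = ENNReal.ofReal (Real.exp (-b)) * ENNReal.ofReal ((1 / Ω_RR) / (1 / Ω_RR + a)) := by
      rw [← Measure.map_apply (hUm.prodMk hVm) hE₁m, hmapUV,
        Measure.prod_apply_symm hE₁m]
      have hcong : (fun v => expMeasure (1 / Ω_SR) ((fun u => (u, v)) ⁻¹' E₁))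
          =ᵐ[expMeasure (1 / Ω_RR)]
          (fun v => ENNReal.ofReal (Real.exp (-(a * v))) * ENNReal.ofReal (Real.exp (-b))) := by
        filter_upwards [aux_exp_ae_nonneg (1 / Ω_RR)] with v hv
        have hD : 0 < (1 - ρ) * k * (P_R + P_Δ) * v + σR2 := by
          have h0 : 0 ≤ (1 - ρ) * k * (P_R + P_Δ) * v := by positivity
          linarith
        have hslice : (fun u => (u, v)) ⁻¹' E₁
            = Set.Ioi (x * ((1 - ρ) * k * (P_R + P_Δ) * v + σR2) / ((1 - ρ) * P_S)) := by
          ext u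
          rw [Set.mem_preimage, hE₁_def]
          simp only [Set.mem_setOf_eq, Set.mem_Ioi]
          rw [lt_div_iff₀ hD, div_lt_iff₀ hN]
          constructor <;> intro h <;> nlinarith
        have hg0 : 0 ≤ x * ((1 - ρ) * k * (P_R + P_Δ) * v + σR2) / ((1 - ρ) * P_S) :=
          div_nonneg (mul_nonneg hx0 hD.le) hN.le
        rw [hslice, aux_exp_Ioi hrU hg0,
          show 1 / Ω_SR * (x * ((1 - ρ) * k * (P_R + P_Δ) * v + σR2) / ((1 - ρ) * P_S))
            = a * v + b by rw [ha_def, hb_def]; field_simp,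
          ← ENNReal.ofReal_mul (Real.exp_nonneg _), ← Real.exp_add]
        congr 2
        ring
      rw [lintegral_congr_ae hcong,
        lintegral_mul_const _ (show Measurable (fun v : ℝ => ENNReal.ofReal (Real.exp (-(a * v)))) by fun_prop),
        aux_laplace hrV ha0, mul_comm]
    have hSm : MeasurableSet ((fun ω => (U ω, V ω)) ⁻¹' E₁) := (hUm.prodMk hVm) hE₁m
    have hTm : MeasurableSet (W ⁻¹' E₂) := hWm hE₂m
    have hindep2 : ℙ ((fun ω => (U ω, V ω)) ⁻¹' E₁ ∩ W ⁻¹' E₂)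
        = ℙ ((fun ω => (U ω, V ω)) ⁻¹' E₁) * ℙ (W ⁻¹' E₂) :=
      hUVW.measure_inter_preimage_eq_mul E₁ E₂ hE₁m hE₂m
    have hcompl : {ω | Y ω ≤ x} = ({ω | x < Y ω})ᶜ := by
      ext ω; simp [not_lt]
    rw [hcompl, hset, measure_compl (hSm.inter hTm) (measure_ne_top _ _), measure_univ,
      hindep2, hPS1, hPT,
      ENNReal.toReal_sub_of_le (by rw [← hPS1, ← hPT, ← hindep2]; exact prob_le_one)
        ENNReal.one_ne_top,
      ENNReal.toReal_one, ENNReal.toReal_mul, ENNReal.toReal_mul,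
      ENNReal.toReal_ofReal (Real.exp_nonneg _), ENNReal.toReal_ofReal (Real.exp_nonneg _),
      ENNReal.toReal_ofReal (by positivity)]
    have hfrac : (1 / Ω_RR) / (1 / Ω_RR + a)
        = P_S * Ω_SR / (P_S * Ω_SR + k * (P_R + P_Δ) * Ω_RR * x) := by
      rw [ha_def]
      have hden : 0 < P_S * Ω_SR + k * (P_R + P_Δ) * Ω_RR * x := by positivity
      field_simp
    have hexp : Real.exp (-b) * Real.exp (-(1 / Ω_RD * t))
        = Real.exp (-(σR2 / ((1 - ρ) * P_S * Ω_SR)) * x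
            - (σD2 / ((P_R - P_Δ * x) * Ω_RD)) * x) := by
      rw [← Real.exp_add]
      congr 1
      rw [hb_def, ht_def]
      field_simp
      ring
    rw [show Real.exp (-b) * ((1 / Ω_RR) / (1 / Ω_RR + a)) * Real.exp (-(1 / Ω_RD * t))
      = ((1 / Ω_RR) / (1 / Ω_RR + a)) * (Real.exp (-b) * Real.exp (-(1 / Ω_RD * t))) by ring,
      hfrac, hexp]
  · intro x hxge
    have hx0 : 0 < x := lt_of_lt_of_le (div_pos hPR hPΔ) hxge
    have hPle : P_R ≤ x * P_Δ := by
      have := (div_le_iff₀ hPΔ).1 hxge; linarith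
    set E₂ : Set ℝ := {w : ℝ | x < P_R * w / (P_Δ * w + σD2)} with hE₂_def
    have hE₂m : MeasurableSet E₂ := by
      apply measurableSet_lt measurable_const
      exact (measurable_const.mul measurable_id).div
        ((measurable_const.mul measurable_id).add measurable_const)
    have hsub : E₂ ⊆ Set.Iio 0 := by
      intro w hw
      by_contra hwn
      have hw0 : 0 ≤ w := by simpa [not_lt] using hwn
      have hD : 0 < P_Δ * w + σD2 := by nlinarith
      have hle : P_R * w / (P_Δ * w + σD2) ≤ x := by
        rw [div_le_iff₀ hD]; nlinarith
      have hw' : x < P_R * w / (P_Δ * w + σD2) := by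
        simpa [hE₂_def, Set.mem_setOf_eq] using hw
      exact absurd hw' (not_lt.2 hle)
    have hT0 : ℙ {ω | x < Y ω} = 0 := by
      have hsub2 : {ω | x < Y ω} ⊆ W ⁻¹' E₂ := by
        intro ω hω
        simp only [Set.mem_setOf_eq, hY ω, lt_min_iff] at hω
        exact hω.2
      have : ℙ (W ⁻¹' E₂) = 0 := by
        rw [← Measure.map_apply hWm hE₂m, hW]
        exact le_antisymm (le_trans (measure_mono hsub) (aux_exp_Iio _).le) bot_le
      exact le_antisymm (le_trans (measure_mono hsub2) this.le) bot_le
    have h1le : (1 : ℝ≥0∞) ≤ ℙ {ω | Y ω ≤ x} := by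
      have hcover : (Set.univ : Set α) ⊆ {ω | Y ω ≤ x} ∪ {ω | x < Y ω} := by
        intro ω _
        rcases le_or_gt (Y ω) x with h | h
        · exact Or.inl h
        · exact Or.inr h
      calc (1 : ℝ≥0∞) = ℙ (Set.univ : Set α) := measure_univ.symm
        _ ≤ ℙ ({ω | Y ω ≤ x} ∪ {ω | x < Y ω}) := measure_mono hcover
        _ ≤ ℙ {ω | Y ω ≤ x} + ℙ {ω | x < Y ω} := measure_union_le _ _
        _ = ℙ {ω | Y ω ≤ x} := by rw [hT0, add_zero]
    have : ℙ {ω | Y ω ≤ x} = 1 := le_antisymm prob_le_one h1le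
    rw [this, ENNReal.toReal_one]
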